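/- The relation ⪯ is a partial order on V (reflexive, antisymmetric and transitive), and moreover (V, ⪯) is a lattice: every pair of elements u, w ∈ V has a least upper bound sup(u,w) and a greatest lower bound inf(u,w) with respect to ⪯. -/

import Mathlib

/-- The vertex set of the body-centered cubic lattice:
integer triples whose coordinates all have the same parity. -/
def bccVertices : Set (ℤ × ℤ × ℤ) :=
  {v | v.1 ≡ v.2.1 [ZMOD 2] ∧ v.2.1 ≡ v.2.2 [ZMOD 2]}

/-- The causal steps of the bcc lattice with respect to the sweep direction `t = (1,1,1)`:
the edge vectors having positive inner product with `t`. -/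
def causalSteps : Set (ℤ × ℤ × ℤ) :=
  {(2, 0, 0), (0, 2, 0), (0, 0, 2), (1, 1, 1), (1, 1, -1), (1, -1, 1), (-1, 1, 1)}

/-- `u ⪯ w` iff `w - u` is a finite sum (with repetitions allowed, possibly empty)
of causal steps, i.e. `w - u` lies in the additive submonoid generated by them. -/
def sweepLE (u w : ℤ × ℤ × ℤ) : Prop :=
  w - u ∈ AddSubmonoid.closure causalSteps

lemma bcc_mem_closure_iff (d : ℤ × ℤ × ℤ) :
    d ∈ AddSubmonoid.closure causalSteps ↔
      d.1 % 2 = d.2.1 % 2 ∧ d.2.1 % 2 = d.2.2 % 2 ∧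
      0 ≤ d.1 + d.2.1 ∧ 0 ≤ d.1 + d.2.2 ∧ 0 ≤ d.2.1 + d.2.2 := by
  constructor
  · intro h
    induction h using AddSubmonoid.closure_induction with
    | mem x hx =>
      simp only [causalSteps, Set.mem_insert_iff, Set.mem_singleton_iff] at hx
      rcases hx with h|h|h|h|h|h|h <;> subst h <;> norm_num
    | zero => norm_num
    | add x y hx hy px py =>
      simp only [Prod.fst_add, Prod.snd_add] at *
      omega
  · rintro ⟨h1, h2, h3, h4, h5⟩
    obtain ⟨m, hm⟩ : ∃ m : ℕ, d.1 + d.2.1 = 2 * m := by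
      refine ⟨(d.1 + d.2.1).toNat / 2, ?_⟩; omega
    obtain ⟨n, hn⟩ : ∃ n : ℕ, d.1 + d.2.2 = 2 * n := by
      refine ⟨(d.1 + d.2.2).toNat / 2, ?_⟩; omega
    obtain ⟨p, hp⟩ : ∃ p : ℕ, d.2.1 + d.2.2 = 2 * p := by
      refine ⟨(d.2.1 + d.2.2).toNat / 2, ?_⟩; omega
    have hd : d = m • ((1,1,-1) : ℤ×ℤ×ℤ) + n • ((1,-1,1) : ℤ×ℤ×ℤ)
        + p • ((-1,1,1) : ℤ×ℤ×ℤ) := by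
      have : d = (d.1, d.2.1, d.2.2) := rfl
      rw [this]
      simp only [Prod.smul_mk, Prod.mk_add_mk, smul_eq_mul, Prod.mk.injEq,
        nsmul_eq_mul]
      refine ⟨by omega, by omega, by omega⟩
    rw [hd]
    have h1 : ((1,1,-1) : ℤ×ℤ×ℤ) ∈ causalSteps := by simp [causalSteps]
    have h2 : ((1,-1,1) : ℤ×ℤ×ℤ) ∈ causalSteps := by simp [causalSteps]
    have h3 : ((-1,1,1) : ℤ×ℤ×ℤ) ∈ causalSteps := by simp [causalSteps]
    exact add_mem (add_mem (nsmul_mem (AddSubmonoid.subset_closure h1) m)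
      (nsmul_mem (AddSubmonoid.subset_closure h2) n))
      (nsmul_mem (AddSubmonoid.subset_closure h3) p)

lemma sweepLE_iff (u w : ℤ × ℤ × ℤ) :
    sweepLE u w ↔
      (w.1 - u.1) % 2 = (w.2.1 - u.2.1) % 2 ∧
      (w.2.1 - u.2.1) % 2 = (w.2.2 - u.2.2) % 2 ∧
      u.1 + u.2.1 ≤ w.1 + w.2.1 ∧ u.1 + u.2.2 ≤ w.1 + w.2.2 ∧
      u.2.1 + u.2.2 ≤ w.2.1 + w.2.2 := by
  rw [sweepLE, bcc_mem_closure_iff]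
  simp only [Prod.fst_sub, Prod.snd_sub]
  constructor <;> rintro ⟨a, b, c, d, e⟩ <;> exact ⟨a, b, by omega, by omega, by omega⟩

lemma bcc_iff (v : ℤ × ℤ × ℤ) :
    v ∈ bccVertices ↔ v.1 % 2 = v.2.1 % 2 ∧ v.2.1 % 2 = v.2.2 % 2 := by
  simp [bccVertices, Int.ModEq]

theorem statement13 :
    (∀ u ∈ bccVertices, sweepLE u u) ∧
    (∀ u ∈ bccVertices, ∀ w ∈ bccVertices, sweepLE u w → sweepLE w u → u = w) ∧
    (∀ u ∈ bccVertices, ∀ v ∈ bccVertices, ∀ w ∈ bccVertices,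
      sweepLE u v → sweepLE v w → sweepLE u w) ∧
    (∀ u ∈ bccVertices, ∀ w ∈ bccVertices, ∃ z ∈ bccVertices,
      sweepLE u z ∧ sweepLE w z ∧
      ∀ y ∈ bccVertices, sweepLE u y → sweepLE w y → sweepLE z y) ∧
    (∀ u ∈ bccVertices, ∀ w ∈ bccVertices, ∃ z ∈ bccVertices,
      sweepLE z u ∧ sweepLE z w ∧
      ∀ y ∈ bccVertices, sweepLE y u → sweepLE y w → sweepLE y z) := by
  refine ⟨?_, ?_, ?_, ?_, ?_⟩
  · intro u _
    rw [sweepLE_iff]; omega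
  · intro u hu w hw h1 h2
    rw [sweepLE_iff] at h1 h2
    have : u.1 = w.1 ∧ u.2.1 = w.2.1 ∧ u.2.2 = w.2.2 := by omega
    obtain ⟨a, b, c⟩ := this
    exact Prod.ext a (Prod.ext b c)
  · intro u _ v _ w _ h1 h2
    rw [sweepLE_iff] at *
    omega
  · intro u hu w hw
    rw [bcc_iff] at hu hw
    obtain ⟨a, ha⟩ : ∃ a : ℤ, max (u.1 + u.2.1) (w.1 + w.2.1) = 2 * a := by
      rcases max_choice (u.1 + u.2.1) (w.1 + w.2.1) with h | h
      · rw [h]; exact ⟨(u.1 + u.2.1)/2, by omega⟩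
      · rw [h]; exact ⟨(w.1 + w.2.1)/2, by omega⟩
    obtain ⟨b, hb⟩ : ∃ b : ℤ, max (u.1 + u.2.2) (w.1 + w.2.2) = 2 * b := by
      rcases max_choice (u.1 + u.2.2) (w.1 + w.2.2) with h | h
      · rw [h]; exact ⟨(u.1 + u.2.2)/2, by omega⟩
      · rw [h]; exact ⟨(w.1 + w.2.2)/2, by omega⟩
    obtain ⟨c, hc⟩ : ∃ c : ℤ, max (u.2.1 + u.2.2) (w.2.1 + w.2.2) = 2 * c := by
      rcases max_choice (u.2.1 + u.2.2) (w.2.1 + w.2.2) with h | h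
      · rw [h]; exact ⟨(u.2.1 + u.2.2)/2, by omega⟩
      · rw [h]; exact ⟨(w.2.1 + w.2.2)/2, by omega⟩
    have ha1 : u.1 + u.2.1 ≤ 2 * a := ha ▸ le_max_left _ _
    have ha2 : w.1 + w.2.1 ≤ 2 * a := ha ▸ le_max_right _ _
    have ha3 : 2 * a = u.1 + u.2.1 ∨ 2 * a = w.1 + w.2.1 := ha ▸ max_choice _ _
    have hb1 : u.1 + u.2.2 ≤ 2 * b := hb ▸ le_max_left _ _
    have hb2 : w.1 + w.2.2 ≤ 2 * b := hb ▸ le_max_right _ _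
    have hb3 : 2 * b = u.1 + u.2.2 ∨ 2 * b = w.1 + w.2.2 := hb ▸ max_choice _ _
    have hc1 : u.2.1 + u.2.2 ≤ 2 * c := hc ▸ le_max_left _ _
    have hc2 : w.2.1 + w.2.2 ≤ 2 * c := hc ▸ le_max_right _ _
    have hc3 : 2 * c = u.2.1 + u.2.2 ∨ 2 * c = w.2.1 + w.2.2 := hc ▸ max_choice _ _
    refine ⟨(a + b - c, a - b + c, -a + b + c), ?_, ?_, ?_, ?_⟩
    · rw [bcc_iff]; dsimp only; omega
    · rw [sweepLE_iff]; dsimp only; omega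
    · rw [sweepLE_iff]; dsimp only; omega
    · intro y hy hy1 hy2
      rw [bcc_iff] at hy
      rw [sweepLE_iff] at hy1 hy2 ⊢
      dsimp only at *
      omega
  · intro u hu w hw
    rw [bcc_iff] at hu hw
    obtain ⟨a, ha⟩ : ∃ a : ℤ, min (u.1 + u.2.1) (w.1 + w.2.1) = 2 * a := by
      rcases min_choice (u.1 + u.2.1) (w.1 + w.2.1) with h | h
      · rw [h]; exact ⟨(u.1 + u.2.1)/2, by omega⟩
      · rw [h]; exact ⟨(w.1 + w.2.1)/2, by omega⟩
    obtain ⟨b, hb⟩ : ∃ b : ℤ, min (u.1 + u.2.2) (w.1 + w.2.2) = 2 * b := by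
      rcases min_choice (u.1 + u.2.2) (w.1 + w.2.2) with h | h
      · rw [h]; exact ⟨(u.1 + u.2.2)/2, by omega⟩
      · rw [h]; exact ⟨(w.1 + w.2.2)/2, by omega⟩
    obtain ⟨c, hc⟩ : ∃ c : ℤ, min (u.2.1 + u.2.2) (w.2.1 + w.2.2) = 2 * c := by
      rcases min_choice (u.2.1 + u.2.2) (w.2.1 + w.2.2) with h | h
      · rw [h]; exact ⟨(u.2.1 + u.2.2)/2, by omega⟩
      · rw [h]; exact ⟨(w.2.1 + w.2.2)/2, by omega⟩
    have ha1 : 2 * a ≤ u.1 + u.2.1 := ha ▸ min_le_left _ _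
    have ha2 : 2 * a ≤ w.1 + w.2.1 := ha ▸ min_le_right _ _
    have ha3 : 2 * a = u.1 + u.2.1 ∨ 2 * a = w.1 + w.2.1 := ha ▸ min_choice _ _
    have hb1 : 2 * b ≤ u.1 + u.2.2 := hb ▸ min_le_left _ _
    have hb2 : 2 * b ≤ w.1 + w.2.2 := hb ▸ min_le_right _ _
    have hb3 : 2 * b = u.1 + u.2.2 ∨ 2 * b = w.1 + w.2.2 := hb ▸ min_choice _ _
    have hc1 : 2 * c ≤ u.2.1 + u.2.2 := hc ▸ min_le_left _ _
    have hc2 : 2 * c ≤ w.2.1 + w.2.2 := hc ▸ min_le_right _ _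
    have hc3 : 2 * c = u.2.1 + u.2.2 ∨ 2 * c = w.2.1 + w.2.2 := hc ▸ min_choice _ _
    refine ⟨(a + b - c, a - b + c, -a + b + c), ?_, ?_, ?_, ?_⟩
    · rw [bcc_iff]; dsimp only; omega
    · rw [sweepLE_iff]; dsimp only; omega
    · rw [sweepLE_iff]; dsimp only; omega
    · intro y hy hy1 hy2
      rw [bcc_iff] at hy
      rw [sweepLE_iff] at hy1 hy2 ⊢
      dsimp only at *
      omega
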